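/- The map a ↦ a³, b ↦ b defines an injective non-surjective endomorphism of the Klein bottle group NS₂ = ⟨a, b | aba⁻¹b⟩; hence NS₂ is not co-Hopfian. -/

import Mathlib

/-- The single defining relator `a b a⁻¹ b` of the Klein bottle group. -/
def kleinRels : Set (FreeGroup (Fin 2)) :=
  {FreeGroup.of 0 * FreeGroup.of 1 * (FreeGroup.of 0)⁻¹ * FreeGroup.of 1}

/-- The Klein bottle group `NS₂ = ⟨a, b ∣ a b a⁻¹ b⟩`. -/
abbrev KleinBottleGroup : Type := PresentedGroup kleinRels

namespace KleinAux

open Multiplicative SemidirectProduct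

abbrev MZ := Multiplicative ℤ

/-- sign `(-1)^n` -/
def ε (n : ℤ) : ℤ := if n % 2 = 0 then 1 else -1

lemma ε_zero : ε 0 = 1 := rfl

lemma ε_succ (n : ℤ) : ε (n + 1) = -ε n := by
  unfold ε
  rcases Int.emod_two_eq n with h | h
  · have h1 : (n + 1) % 2 = 1 := by omega
    simp [h, h1]
  · have h1 : (n + 1) % 2 = 0 := by omega
    simp [h, h1]

lemma ε_pred (n : ℤ) : ε (n - 1) = -ε n := by
  unfold ε
  rcases Int.emod_two_eq n with h | h
  · have h1 : (n - 1) % 2 = 1 := by omega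
    simp [h, h1]
  · have h1 : (n - 1) % 2 = 0 := by omega
    simp [h, h1]

lemma ε_mul_three (n : ℤ) : ε (n * 3) = ε n := by
  unfold ε
  rcases Int.emod_two_eq n with h | h
  · have h1 : (n * 3) % 2 = 0 := by omega
    simp [h, h1]
  · have h1 : (n * 3) % 2 = 1 := by omega
    simp [h, h1]

lemma ε_three : ε 3 = -1 := rfl

/-- inversion automorphism of ℤ -/
def ι : MulAut MZ := MulEquiv.inv MZ

@[simp] lemma ι_apply (x : MZ) : ι x = x⁻¹ := rfl

def φ : MZ →* MulAut MZ := zpowersHom _ ι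

lemma φ_apply (g : MZ) : φ g = ι ^ g.toAdd := rfl

lemma ι_sq : ι * ι = 1 := by
  ext x
  simp [ι]

lemma ι_inv : ι⁻¹ = ι := by
  rw [eq_comm, eq_inv_iff_mul_eq_one, ι_sq]

lemma ι_zpow_apply (n : ℤ) (x : MZ) : (ι ^ n) x = x ^ ε n := by
  induction n using Int.induction_on with
  | zero => simp [ε_zero]
  | succ k ih =>
      rw [zpow_add, zpow_one, MulAut.mul_apply, ι_apply, map_inv, ih, ε_succ, zpow_neg]
  | pred k ih =>
      rw [zpow_sub, zpow_one, ι_inv, MulAut.mul_apply, ι_apply, map_inv, ih, ε_pred, zpow_neg]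

/-- Concrete model: `ℤ ⋊ ℤ`. -/
abbrev K := SemidirectProduct MZ MZ φ

def A : K := inr (ofAdd 1)
def B : K := inl (ofAdd 1)

def fK : Fin 2 → K := ![A, B]

lemma relK : ∀ r ∈ kleinRels, FreeGroup.lift fK r = 1 := by
  intro r hr
  rw [kleinRels, Set.mem_singleton_iff] at hr
  subst hr
  simp only [map_mul, map_inv, FreeGroup.lift_apply_of]
  show A * B * A⁻¹ * B = 1
  have h : A * B * A⁻¹ = B⁻¹ := by
    rw [A, B, ← map_inv, ← SemidirectProduct.inl_aut, ← map_inv]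
    congr 1
  rw [h, inv_mul_cancel]

/-- the hom `Klein →* K`. -/
def π : KleinBottleGroup →* K := PresentedGroup.toGroup relK

def aP : KleinBottleGroup := PresentedGroup.of 0
def bP : KleinBottleGroup := PresentedGroup.of 1

@[simp] lemma π_aP : π aP = A := PresentedGroup.toGroup.of relK
@[simp] lemma π_bP : π bP = B := PresentedGroup.toGroup.of relK

lemma relP : aP * bP * aP⁻¹ * bP = 1 := by
  have h : (PresentedGroup.mk kleinRels)
      (FreeGroup.of 0 * FreeGroup.of 1 * (FreeGroup.of 0)⁻¹ * FreeGroup.of 1) = 1 := by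
    rw [show ((1 : KleinBottleGroup) = PresentedGroup.mk kleinRels 1) from rfl]
    apply (QuotientGroup.eq_one_iff _).2
    exact Subgroup.subset_normalClosure rfl
  simp only [map_mul, map_inv] at h
  exact h

lemma conj_bP : aP * bP * aP⁻¹ = bP⁻¹ := by
  have h := relP
  rw [← eq_inv_iff_mul_eq_one] at h
  exact h

lemma conj_bP' : aP⁻¹ * bP * aP = bP⁻¹ := by
  have h : aP⁻¹ * bP⁻¹ * aP = bP := by
    rw [← conj_bP]
    group
  conv_rhs => rw [← h]
  group

lemma conj_bP_zpow (n : ℤ) : aP ^ n * bP * (aP ^ n)⁻¹ = bP ^ ε n := by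
  induction n using Int.induction_on with
  | zero => simp [ε_zero]
  | succ k ih =>
      rw [zpow_add, zpow_one, mul_inv_rev]
      calc aP ^ (k : ℤ) * aP * bP * (aP⁻¹ * (aP ^ (k : ℤ))⁻¹)
          = aP ^ (k : ℤ) * (aP * bP * aP⁻¹) * (aP ^ (k : ℤ))⁻¹ := by group
        _ = aP ^ (k : ℤ) * bP⁻¹ * (aP ^ (k : ℤ))⁻¹ := by rw [conj_bP]
        _ = (aP ^ (k : ℤ) * bP * (aP ^ (k : ℤ))⁻¹)⁻¹ := by group
        _ = (bP ^ ε (k : ℤ))⁻¹ := by rw [ih]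
        _ = bP ^ ε ((k : ℤ) + 1) := by rw [ε_succ, zpow_neg]
  | pred k ih =>
      rw [zpow_sub, zpow_one, mul_inv_rev, inv_inv]
      calc aP ^ (-k : ℤ) * aP⁻¹ * bP * (aP * (aP ^ (-k : ℤ))⁻¹)
          = aP ^ (-k : ℤ) * (aP⁻¹ * bP * aP) * (aP ^ (-k : ℤ))⁻¹ := by group
        _ = aP ^ (-k : ℤ) * bP⁻¹ * (aP ^ (-k : ℤ))⁻¹ := by rw [conj_bP']
        _ = (aP ^ (-k : ℤ) * bP * (aP ^ (-k : ℤ))⁻¹)⁻¹ := by group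
        _ = (bP ^ ε (-k : ℤ))⁻¹ := by rw [ih]
        _ = bP ^ ε ((-k : ℤ) - 1) := by rw [ε_pred, zpow_neg]

/-- left inverse of π -/
def ρ : K →* KleinBottleGroup :=
  SemidirectProduct.lift (zpowersHom _ bP) (zpowersHom _ aP) (by
    intro g
    apply MonoidHom.ext
    intro m
    simp only [MonoidHom.comp_apply, MulEquiv.coe_toMonoidHom, MulAut.conj_apply,
      zpowersHom_apply]
    rw [φ_apply, ι_zpow_apply, Int.toAdd_zpow]
    rw [show aP ^ g.toAdd * bP ^ m.toAdd * (aP ^ g.toAdd)⁻¹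
        = (aP ^ g.toAdd * bP * (aP ^ g.toAdd)⁻¹) ^ m.toAdd from (conj_zpow).symm]
    rw [conj_bP_zpow, ← zpow_mul]
    ring_nf)

lemma ρ_π : ρ.comp π = MonoidHom.id _ := by
  apply PresentedGroup.ext
  intro x
  fin_cases x
  · show ρ (π aP) = aP
    rw [π_aP]
    show ρ (inr (ofAdd 1)) = aP
    rw [ρ, SemidirectProduct.lift_inr, zpowersHom_apply]
    simp
  · show ρ (π bP) = bP
    rw [π_bP]
    show ρ (inl (ofAdd 1)) = bP
    rw [ρ, SemidirectProduct.lift_inl, zpowersHom_apply]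
    simp

lemma π_inj : Function.Injective π := by
  intro x y h
  have hx : ρ (π x) = x := by rw [← MonoidHom.comp_apply, ρ_π, MonoidHom.id_apply]
  have hy : ρ (π y) = y := by rw [← MonoidHom.comp_apply, ρ_π, MonoidHom.id_apply]
  rw [← hx, ← hy, h]

lemma pow3 (g : MZ) : ofAdd (3 : ℤ) ^ g.toAdd = g ^ (3 : ℤ) := by
  apply Multiplicative.toAdd.injective
  rw [Int.toAdd_zpow, Int.toAdd_zpow]
  simp [mul_comm]

/-- the cubing endomorphism on the concrete model -/
def σ : K →* K :=
  SemidirectProduct.lift inl (inr.comp (zpowersHom _ (ofAdd (3 : ℤ)))) (by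
    intro g
    apply MonoidHom.ext
    intro m
    simp only [MonoidHom.comp_apply, MulEquiv.coe_toMonoidHom, MulAut.conj_apply,
      zpowersHom_apply]
    rw [← map_inv, ← SemidirectProduct.inl_aut]
    congr 1
    rw [φ_apply, φ_apply, ι_zpow_apply, ι_zpow_apply, Int.toAdd_zpow]
    rw [show (ofAdd (3 : ℤ)).toAdd * g.toAdd = g.toAdd * 3 from by
      simp [mul_comm]]
    rw [ε_mul_three])

lemma σ_apply (z : K) : σ z = inl z.left * inr (z.right ^ (3 : ℤ)) := by
  conv_lhs => rw [← SemidirectProduct.inl_left_mul_inr_right z]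
  rw [map_mul, σ, SemidirectProduct.lift_inl, SemidirectProduct.lift_inr,
    MonoidHom.comp_apply, zpowersHom_apply, pow3]

lemma K_ext {x y : K} (hl : x.left = y.left) (hr : x.right = y.right) : x = y := by
  cases x; cases y; cases hl; cases hr; rfl

lemma left_inl_mul_inr (n g : MZ) : ((inl n * inr g : K)).left = n := by
  simp [SemidirectProduct.mul_left]

lemma right_inl_mul_inr (n g : MZ) : ((inl n * inr g : K)).right = g := by
  simp [SemidirectProduct.mul_right]

lemma σ_inj : Function.Injective σ := by
  intro x y h
  rw [σ_apply, σ_apply] at h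
  have hl := congrArg SemidirectProduct.left h
  have hr := congrArg SemidirectProduct.right h
  rw [left_inl_mul_inr, left_inl_mul_inr] at hl
  rw [right_inl_mul_inr, right_inl_mul_inr] at hr
  have hr' : x.right = y.right := by
    apply Multiplicative.toAdd.injective
    have := congrArg Multiplicative.toAdd hr
    rw [Int.toAdd_zpow, Int.toAdd_zpow] at this
    omega
  exact K_ext hl hr'

lemma gψ_rel : ∀ r ∈ kleinRels,
    FreeGroup.lift (![aP ^ 3, bP] : Fin 2 → KleinBottleGroup) r = 1 := by
  intro r hr
  rw [kleinRels, Set.mem_singleton_iff] at hr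
  subst hr
  simp only [map_mul, map_inv, FreeGroup.lift_apply_of]
  show aP ^ 3 * bP * (aP ^ 3)⁻¹ * bP = 1
  have hcast : aP ^ (3 : ℕ) = aP ^ (3 : ℤ) := by norm_cast
  rw [hcast, conj_bP_zpow 3, ε_three, zpow_neg, zpow_one, inv_mul_cancel]

/-- the endomorphism a ↦ a³, b ↦ b -/
def ψ0 : KleinBottleGroup →* KleinBottleGroup := PresentedGroup.toGroup gψ_rel

@[simp] lemma ψ0_aP : ψ0 aP = aP ^ 3 := PresentedGroup.toGroup.of gψ_rel
@[simp] lemma ψ0_bP : ψ0 bP = bP := PresentedGroup.toGroup.of gψ_rel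

lemma π_ψ0 : π.comp ψ0 = σ.comp π := by
  apply PresentedGroup.ext
  intro x
  fin_cases x
  · show π (ψ0 aP) = σ (π aP)
    rw [ψ0_aP, map_pow, π_aP, A, σ, SemidirectProduct.lift_inr]
    rw [MonoidHom.comp_apply, zpowersHom_apply, ← map_pow]
    congr 1
  · show π (ψ0 bP) = σ (π bP)
    rw [ψ0_bP, π_bP, B, σ, SemidirectProduct.lift_inl]

lemma ψ0_inj : Function.Injective ψ0 := by
  intro x y h
  apply π_inj
  apply σ_inj
  have hx : σ (π x) = π (ψ0 x) := by rw [← MonoidHom.comp_apply, ← π_ψ0, MonoidHom.comp_apply]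
  have hy : σ (π y) = π (ψ0 y) := by rw [← MonoidHom.comp_apply, ← π_ψ0, MonoidHom.comp_apply]
  rw [hx, hy, h]

lemma ψ0_not_surj : ¬ Function.Surjective ψ0 := by
  intro hs
  obtain ⟨x, hx⟩ := hs aP
  have h2 : σ (π x) = A := by
    rw [← MonoidHom.comp_apply, ← π_ψ0, MonoidHom.comp_apply, hx, π_aP]
  rw [σ_apply] at h2
  have hr := congrArg SemidirectProduct.right h2
  rw [right_inl_mul_inr] at hr
  have := congrArg Multiplicative.toAdd hr
  rw [Int.toAdd_zpow] at this
  simp only [A, SemidirectProduct.right_inr, toAdd_ofAdd] at this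
  omega

end KleinAux

/-- The map `a ↦ a³`, `b ↦ b` defines an injective non-surjective endomorphism of
the Klein bottle group; hence the Klein bottle group is not co-Hopfian. -/
theorem klein_not_coHopfian :
    (∃ ψ : Monoid.End KleinBottleGroup,
      ψ (PresentedGroup.of 0) = (PresentedGroup.of 0 : KleinBottleGroup) ^ 3 ∧
      ψ (PresentedGroup.of 1) = (PresentedGroup.of 1 : KleinBottleGroup) ∧
      Function.Injective ψ ∧ ¬ Function.Surjective ψ) ∧
    ¬ (∀ ψ : Monoid.End KleinBottleGroup,
        Function.Injective ψ → Function.Surjective ψ) := by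
  refine ⟨⟨KleinAux.ψ0, KleinAux.ψ0_aP, KleinAux.ψ0_bP, KleinAux.ψ0_inj,
    KleinAux.ψ0_not_surj⟩, ?_⟩
  intro h
  exact KleinAux.ψ0_not_surj (h _ KleinAux.ψ0_inj)
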